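/- Let Ω be the 5×5 skew-symmetric matrix with entries Ω₁₃ = -v₀²v₂², Ω₁₄ = v₀²v₃², Ω₁₅ = v₀²v₂²v₄², Ω₂₄ = -v₁²v₃², Ω₂₅ = v₁²v₄², Ω₃₅ = -v₂²v₄², (and Ω_{ji} = -Ω_{ij}, all other entries zero). Then Ω satisfies the Jacobi identity ∑_l (Ω_{li} ∂_l Ω_{jk} + Ω_{lj} ∂_l Ω_{ki} + Ω_{lk} ∂_l Ω_{ij}) = 0 for all i,j,k, hence defines a Poisson bracket on ℝ⁵. -/
import Mathlib


open Matrix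

/-- The structure matrix of the KdV (3,-2) reduction. -/
noncomputable def kdvOmega (v : Fin 5 → ℝ) : Matrix (Fin 5) (Fin 5) ℝ :=
  !![0, 0, -(v 0)^2*(v 2)^2, (v 0)^2*(v 3)^2, (v 0)^2*(v 2)^2*(v 4)^2;
     0, 0, 0, -(v 1)^2*(v 3)^2, (v 1)^2*(v 4)^2;
     (v 0)^2*(v 2)^2, 0, 0, 0, -(v 2)^2*(v 4)^2;
     -(v 0)^2*(v 3)^2, (v 1)^2*(v 3)^2, 0, 0, 0;
     -(v 0)^2*(v 2)^2*(v 4)^2, -(v 1)^2*(v 4)^2, (v 2)^2*(v 4)^2, 0, 0]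

/-- Partial derivative of `f : (Fin 5 → ℝ) → ℝ` with respect to the `l`-th coordinate. -/
noncomputable def pd (l : Fin 5) (f : (Fin 5 → ℝ) → ℝ) (v : Fin 5 → ℝ) : ℝ :=
  deriv (fun t => f (Function.update v l t)) (v l)

/-- The coordinate partial derivatives of the KdV structure matrix, tabulated. -/
noncomputable def kdvD (v : Fin 5 → ℝ) : Fin 5 → Matrix (Fin 5) (Fin 5) ℝ :=
  ![!![0, 0, -2*(v 0)*(v 2)^2, 2*(v 0)*(v 3)^2, 2*(v 0)*(v 2)^2*(v 4)^2;
      0, 0, 0, 0, 0;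
      2*(v 0)*(v 2)^2, 0, 0, 0, 0;
      -2*(v 0)*(v 3)^2, 0, 0, 0, 0;
      -2*(v 0)*(v 2)^2*(v 4)^2, 0, 0, 0, 0],
    !![0, 0, 0, 0, 0;
      0, 0, 0, -2*(v 1)*(v 3)^2, 2*(v 1)*(v 4)^2;
      0, 0, 0, 0, 0;
      0, 2*(v 1)*(v 3)^2, 0, 0, 0;
      0, -2*(v 1)*(v 4)^2, 0, 0, 0],
    !![0, 0, -2*(v 0)^2*(v 2), 0, 2*(v 0)^2*(v 2)*(v 4)^2;
      0, 0, 0, 0, 0;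
      2*(v 0)^2*(v 2), 0, 0, 0, -2*(v 2)*(v 4)^2;
      0, 0, 0, 0, 0;
      -2*(v 0)^2*(v 2)*(v 4)^2, 0, 2*(v 2)*(v 4)^2, 0, 0],
    !![0, 0, 0, 2*(v 0)^2*(v 3), 0;
      0, 0, 0, -2*(v 1)^2*(v 3), 0;
      0, 0, 0, 0, 0;
      -2*(v 0)^2*(v 3), 2*(v 1)^2*(v 3), 0, 0, 0;
      0, 0, 0, 0, 0],
    !![0, 0, 0, 0, 2*(v 0)^2*(v 2)^2*(v 4);
      0, 0, 0, 0, 2*(v 1)^2*(v 4);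
      0, 0, 0, 0, -2*(v 2)^2*(v 4);
      0, 0, 0, 0, 0;
      -2*(v 0)^2*(v 2)^2*(v 4), -2*(v 1)^2*(v 4), 2*(v 2)^2*(v 4), 0, 0]]

set_option maxHeartbeats 4000000 in
theorem pd_kdv (v : Fin 5 → ℝ) (l j k : Fin 5) :
    pd l (fun w => kdvOmega w j k) v = kdvD v l j k := by
  fin_cases l <;> fin_cases j <;> fin_cases k <;>
    simp [pd, kdvOmega, kdvD, Function.update, Matrix.vecHead, Matrix.vecTail] <;>
    first
      | exact Or.inl (by ring)
      | ring

set_option maxHeartbeats 4000000 in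
/-- The KdV structure matrix satisfies the Jacobi identity, hence defines a
Poisson bracket on ℝ⁵. -/
theorem kdvOmega_jacobi (v : Fin 5 → ℝ) (i j k : Fin 5) :
    ∑ l : Fin 5,
      (kdvOmega v l i * pd l (fun w => kdvOmega w j k) v
        + kdvOmega v l j * pd l (fun w => kdvOmega w k i) v
        + kdvOmega v l k * pd l (fun w => kdvOmega w i j) v) = 0 := by
  simp only [Fin.sum_univ_five, pd_kdv]
  fin_cases i <;> fin_cases j <;> fin_cases k <;>
    simp [kdvOmega, kdvD, Matrix.vecHead, Matrix.vecTail] <;>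
    ring
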